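/- Assume p = 2. Then the mutation graph of well-configured C-data has exactly 2n + l − 1 vertices, is connected, and every vertex has exactly two neighbours; that is, it is a cycle (an extended Dynkin diagram of type Ã) on 2n + l − 1 vertices. -/

import Mathlib

open scoped Classical

/-- The numerical setup under which the truncated linear Nakayama algebra `Λ(n,l)`
admits a `d`-cluster tilting subcategory, together with the integers `s i`
(defined by `2 * s i = …`). -/
structure NakSetup where
  n : ℤ
  l : ℤ
  d : ℤ
  p : ℤ
  s : ℤ → ℤ
  hl : 2 ≤ l
  hd : 2 ≤ d
  hp : 1 ≤ p
  hn : 2 * n = (p - 1) * ((d - 1) * l + 2) + l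
  hcase : l = 2 ∨ (2 < l ∧ Even d ∧ Even p)
  hs_odd : ∀ i, 1 ≤ i → i ≤ p → Odd i → 2 * s i = (i - 1) * (d - 1) * l + 2 * i
  hs_even : ∀ i, 1 ≤ i → i ≤ p → Even i → 2 * s i = (i - 1) * ((d - 1) * l + 2) + l

/-- A `C`-datum: subsets `X i ⊆ [1, l-1]` for `2 ≤ i ≤ p` (empty outside this range)
together with disjoint subsets `R, B ⊆ [1, n]`. -/
structure CDatum (S : NakSetup) where
  X : ℤ → Finset ℤ
  R : Finset ℤ
  B : Finset ℤ
  hX : ∀ i, X i ⊆ Finset.Icc 1 (S.l - 1)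
  hXout : ∀ i, ¬(2 ≤ i ∧ i ≤ S.p) → X i = ∅
  hR : R ⊆ Finset.Icc 1 S.n
  hB : B ⊆ Finset.Icc 1 S.n
  hRB : Disjoint R B

namespace CDatum

variable {S : NakSetup}

/-- `m i = |X i|` (as an integer). -/
noncomputable def m (D : CDatum S) (i : ℤ) : ℤ := (D.X i).card

/-- `l_i`: the minimum of `X i`, or `l` if `X i = ∅`. -/
noncomputable def lo (D : CDatum S) (i : ℤ) : ℤ :=
  if h : (D.X i).Nonempty then (D.X i).min' h else S.l

/-- `n_i`: the maximum of `X i`, or `0` if `X i = ∅`. -/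
noncomputable def hi (D : CDatum S) (i : ℤ) : ℤ :=
  if h : (D.X i).Nonempty then (D.X i).max' h else 0

/-- The interval `𝖡_i`. -/
noncomputable def BI (D : CDatum S) (i : ℤ) : Finset ℤ :=
  if Odd i then Finset.Icc (S.s i) (S.s i + D.hi i - 1)
  else Finset.Icc (S.s i - D.hi i + 1) (S.s i)

/-- The interval `𝖱_i`. -/
noncomputable def RI (D : CDatum S) (i : ℤ) : Finset ℤ :=
  if Odd i then Finset.Icc (S.s (i - 1) - (S.l - D.lo i) + 1) (S.s (i - 1))
  else Finset.Icc (S.s (i - 1)) (S.s (i - 1) + (S.l - D.lo i) - 1)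

/-- A `C`-datum is rigid (the combinatorial form of being a `τ_d`-rigid pair). -/
def Rigid (D : CDatum S) : Prop :=
  (∀ x ∈ D.B, ∀ y ∈ D.R, x < y →
      ∃ z, x < z ∧ z + S.l - 2 < y ∧ Finset.Icc z (z + S.l - 2) ∩ (D.R ∪ D.B) = ∅) ∧
  (∀ i, 2 ≤ i → i ≤ S.p → Odd i →
      D.hi (i - 1) + D.hi i ≤ S.l - 1 ∧ S.l + 1 ≤ D.lo i + D.lo (i + 1) ∧
      (S.d = 2 → D.hi i ≤ D.lo (i + 2) + 1 ∧ D.hi (i - 2) ≤ D.lo i + 1)) ∧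
  (∀ i, 2 ≤ i → i ≤ S.p → Even i →
      D.hi i + D.hi (i + 1) ≤ S.l - 1 ∧ S.l + 1 ≤ D.lo (i - 1) + D.lo i) ∧
  (∀ i, 2 ≤ i → i ≤ S.p → D.R ∩ D.RI i = ∅ ∧ D.B ∩ D.BI i = ∅)

/-- The left endpoint of `Ξ(i, i+k)` (the left endpoint of `𝖱_i`). -/
noncomputable def xiLo (D : CDatum S) (i : ℤ) : ℤ :=
  if Odd i then S.s (i - 1) - (S.l - D.lo i) + 1 else S.s (i - 1)

/-- The right endpoint of `Ξ(i, i+k)`, depending on `j = i + k`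
(the right endpoint of `𝖡_{i+k}`). -/
noncomputable def xiHi (D : CDatum S) (j : ℤ) : ℤ :=
  if Even j then S.s j else S.s j + D.hi j - 1

/-- The interval `Ξ(i, i+k)`. -/
noncomputable def Xi (D : CDatum S) (i k : ℤ) : Finset ℤ :=
  Finset.Icc (D.xiLo i) (D.xiHi (i + k))

/-- The union `𝖡_2 ∪ … ∪ 𝖡_p`. -/
noncomputable def BigB (D : CDatum S) : Finset ℤ :=
  (Finset.Icc 2 S.p).biUnion fun i => D.BI i

/-- The union `𝖱_2 ∪ … ∪ 𝖱_p`. -/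
noncomputable def BigR (D : CDatum S) : Finset ℤ :=
  (Finset.Icc 2 S.p).biUnion fun i => D.RI i

/-- The interval `I` is support. -/
def IsSupport (D : CDatum S) (I : Finset ℤ) : Prop :=
  D.R ∩ I = ∅ ∧ D.B ∩ I = I \ D.BigB

/-- The interval `I` is rigid. -/
def IsRigidI (D : CDatum S) (I : Finset ℤ) : Prop :=
  D.B ∩ I = ∅ ∧ D.R ∩ I = I \ D.BigR

/-- The interval `I` is support to rigid at `x ∈ I`. -/
def IsSuppToRigid (D : CDatum S) (I : Finset ℤ) (x : ℤ) : Prop :=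
  x ∈ I ∧ D.B ∩ I = {y ∈ I | y ≤ x} ∧ (D.B ∩ I).Nonempty ∧
    D.R ∩ I = {y ∈ I | x + S.l ≤ y} ∧ (D.R ∩ I).Nonempty

/-- The interval `I` is rigid to support at `x ∈ I`. -/
def IsRigidToSupp (D : CDatum S) (I : Finset ℤ) (x : ℤ) : Prop :=
  x ∈ I ∧ D.R ∩ I = {y ∈ I | y ≤ x} ∧ (D.R ∩ I).Nonempty ∧
    D.B ∩ I = {y ∈ I | x + 1 ≤ y} ∧ (D.B ∩ I).Nonempty

/-- `(X_i, …, X_{i+k})` is an admissible configuration (types (I)–(VIII)). -/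
def Admissible (D : CDatum S) (i k : ℤ) : Prop :=
  2 ≤ i ∧ i + k ≤ S.p ∧ 0 ≤ k ∧
  (∀ j, 0 ≤ j → j ≤ k → (D.X (i + j)).Nonempty) ∧
  ((k = 0 ∧ D.lo i = 1 ∧ D.hi i < S.l - 1 ∧ D.IsSupport (D.Xi i k)) ∨
   (k = 0 ∧ 1 < D.lo i ∧ D.hi i = S.l - 1 ∧ D.IsRigidI (D.Xi i k)) ∨
   (k = 0 ∧ D.lo i = 1 ∧ D.hi i = S.l - 1 ∧
     (D.IsSupport (D.Xi i k) ∨ D.IsRigidI (D.Xi i k) ∨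
       ∃ x ∈ D.Xi i k \ D.BI i, D.IsSuppToRigid (D.Xi i k) x)) ∨
   (k = 1 ∧ Odd i ∧ D.hi i = S.l - 1 ∧ D.hi (i + 1) = S.l - 1 ∧
     D.m i + D.m (i + 1) < S.l - 1 ∧ D.IsRigidI (D.Xi i k)) ∨
   (k = 1 ∧ Even i ∧ D.lo i = 1 ∧ D.lo (i + 1) = 1 ∧
     D.m i + D.m (i + 1) < S.l - 1 ∧ D.IsSupport (D.Xi i k)) ∨
   (k = 1 ∧ Odd i ∧ D.hi i = S.l - 1 ∧ D.hi (i + 1) = S.l - 1 ∧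
     D.m i + D.m (i + 1) = S.l - 1 ∧
     (D.IsRigidI (D.Xi i k) ∨
       ∃ x ∈ Finset.Icc (S.s i - (S.l - D.m (i + 1))) (S.s i - 1),
         D.IsSuppToRigid (D.Xi i k) x)) ∨
   (k = 1 ∧ Even i ∧ D.lo i = 1 ∧ D.lo (i + 1) = 1 ∧
     D.m i + D.m (i + 1) = S.l - 1 ∧
     (D.IsSupport (D.Xi i k) ∨
       ∃ x ∈ Finset.Icc (S.s i - (S.l - 1)) (S.s i - D.m i),
         D.IsSuppToRigid (D.Xi i k) x)) ∨
   (k = 2 ∧ S.d = 2 ∧ Even i ∧ D.lo i = 1 ∧ D.lo (i + 1) = S.l - D.lo (i + 2) + 1 ∧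
     D.hi (i + 1) = S.l - D.hi i - 1 ∧ D.hi (i + 2) = S.l - 1 ∧
     ∃ x ∈ Finset.Icc (S.s (i + 1) - D.lo (i + 2)) (S.s i - D.hi i),
       D.IsSuppToRigid (D.Xi i k) x))

/-- The configuration on `[i, i+k]` is full: `m_{i+j} = n_{i+j} - l_{i+j} + 1`. -/
def Full (D : CDatum S) (i k : ℤ) : Prop :=
  ∀ j, 0 ≤ j → j ≤ k → D.m (i + j) = D.hi (i + j) - D.lo (i + j) + 1

/-- `[a, b]` is a maximal run of indices with `X` nonempty
(an interval of the diagonal partition). -/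
def IsBlock (D : CDatum S) (a b : ℤ) : Prop :=
  2 ≤ a ∧ b ≤ S.p ∧ a ≤ b ∧ (∀ j, a ≤ j → j ≤ b → (D.X j).Nonempty) ∧
    D.X (a - 1) = ∅ ∧ D.X (b + 1) = ∅

/-- `[a, b]` is the first interval of the diagonal partition. -/
def FirstBlock (D : CDatum S) (a b : ℤ) : Prop :=
  D.IsBlock a b ∧ ∀ j, j < a → D.X j = ∅

/-- `[a, b]` is the last interval of the diagonal partition. -/
def LastBlock (D : CDatum S) (a b : ℤ) : Prop :=
  D.IsBlock a b ∧ ∀ j, b < j → D.X j = ∅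

/-- `[a, b]` and `[a', b']` are consecutive intervals of the diagonal partition. -/
def ConsecBlocks (D : CDatum S) (a b a' b' : ℤ) : Prop :=
  D.IsBlock a b ∧ D.IsBlock a' b' ∧ b < a' ∧ ∀ j, b < j → j < a' → D.X j = ∅

/-- The diagonal component `T = {i ∈ [2, p] : X i ≠ ∅}`. -/
noncomputable def T (D : CDatum S) : Finset ℤ :=
  {i ∈ Finset.Icc 2 S.p | (D.X i).Nonempty}

/-- The configuration on the block `[a, b]` is full admissible of type (III). -/
def FullType3 (D : CDatum S) (a b : ℤ) : Prop :=
  a = b ∧ D.lo a = 1 ∧ D.hi a = S.l - 1 ∧ D.m a = S.l - 1 ∧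
    (D.IsSupport (D.Xi a 0) ∨ D.IsRigidI (D.Xi a 0) ∨
      ∃ x ∈ D.Xi a 0 \ D.BI a, D.IsSuppToRigid (D.Xi a 0) x)

/-- A `Θ`-interval is rigid, support, or rigid to support. -/
def GoodTheta (D : CDatum S) (I : Finset ℤ) : Prop :=
  D.IsRigidI I ∨ D.IsSupport I ∨ ∃ x, D.IsRigidToSupp I x

/-- A `C`-datum is well-configured. -/
def WellConfigured (D : CDatum S) : Prop :=
  (D.T = ∅ ∧ ∃ x, 0 ≤ x ∧ x ≤ S.n ∧ D.R = Finset.Icc 1 x ∧ D.B = Finset.Icc (x + 1) S.n) ∨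
  (D.T.Nonempty ∧
    (∀ a b, D.IsBlock a b → D.Admissible a (b - a) ∧ D.Full a (b - a)) ∧
    (∀ a b a' b', D.ConsecBlocks a b a' b' →
      D.Xi a (b - a) ∩ D.Xi a' (b' - a') = ∅) ∧
    (∀ a b, D.FirstBlock a b → D.GoodTheta (Finset.Icc 1 (D.xiLo a - 1))) ∧
    (∀ a b a' b', D.ConsecBlocks a b a' b' →
      D.GoodTheta (Finset.Icc (D.xiHi b + 1) (D.xiLo a' - 1))) ∧
    (∀ a b, D.LastBlock a b → D.GoodTheta (Finset.Icc (D.xiHi b + 1) S.n)) ∧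
    (∀ a b, D.FirstBlock a b → D.IsRigidI (D.Xi a (b - a)) →
      D.IsRigidI (Finset.Icc 1 (D.xiLo a - 1)) ∨ D.FullType3 a b) ∧
    (∀ a b a' b', D.ConsecBlocks a b a' b' → D.IsRigidI (D.Xi a' (b' - a')) →
      D.IsRigidI (Finset.Icc (D.xiHi b + 1) (D.xiLo a' - 1)) ∨ D.FullType3 a' b') ∧
    (∀ a b a' b', D.ConsecBlocks a b a' b' → D.IsSupport (D.Xi a (b - a)) →
      D.IsSupport (Finset.Icc (D.xiHi b + 1) (D.xiLo a' - 1)) ∨ D.FullType3 a b) ∧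
    (∀ a b, D.LastBlock a b → D.IsSupport (D.Xi a (b - a)) →
      D.IsSupport (Finset.Icc (D.xiHi b + 1) S.n) ∨ D.FullType3 a b))

/-- The summand count `|R| + |B| + Σ_{i=2}^p m_i`. -/
noncomputable def count (D : CDatum S) : ℤ :=
  (D.R.card : ℤ) + (D.B.card : ℤ) + ∑ i ∈ Finset.Icc 2 S.p, D.m i

end CDatum

lemma subset_inter_comm {s t u : Finset ℤ} (h : s ⊆ t ∩ u) : s ⊆ u ∩ t := by
  intro x hx
  have hx' := h hx
  rw [Finset.mem_inter] at hx' ⊢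
  exact ⟨hx'.2, hx'.1⟩

/-- The mutation graph of well-configured `C`-data: two distinct well-configured
`C`-data are adjacent when they are mutations of each other, i.e. they share a common
rigid `C`-datum of summand count `n - 1`. -/
def mutGraph (S : NakSetup) : SimpleGraph {D : CDatum S // D.WellConfigured} where
  Adj D E := D ≠ E ∧ ∃ F : CDatum S, F.Rigid ∧
    (∀ i, F.X i ⊆ D.1.X i ∩ E.1.X i) ∧ F.R ⊆ D.1.R ∩ E.1.R ∧
    F.B ⊆ D.1.B ∩ E.1.B ∧ F.count = S.n - 1
  symm := ⟨by
    rintro D E ⟨hne, F, h1, h2, h3, h4, h5⟩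
    exact ⟨hne.symm, F, h1, fun i => subset_inter_comm (h2 i),
      subset_inter_comm h3, subset_inter_comm h4, h5⟩⟩
  loopless := ⟨fun D h => h.1 rfl⟩

namespace Stmt18Aux

open Finset

lemma icc_inter (a b c d : ℤ) :
    Finset.Icc a b ∩ Finset.Icc c d = Finset.Icc (max a c) (min b d) := by
  ext x; simp [Finset.mem_Icc]; omega

lemma icc_card (a b : ℤ) : ((Finset.Icc a b).card : ℤ) = max (b + 1 - a) 0 := by
  rw [Int.card_Icc]; omega

lemma min'_Icc (a b : ℤ) (h : (Finset.Icc a b).Nonempty) : (Finset.Icc a b).min' h = a := by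
  have hab : a ≤ b := by simpa using h
  refine le_antisymm (Finset.min'_le _ _ (by simp [hab])) ?_
  exact Finset.le_min' _ _ _ (fun x hx => (Finset.mem_Icc.mp hx).1)

lemma max'_Icc (a b : ℤ) (h : (Finset.Icc a b).Nonempty) : (Finset.Icc a b).max' h = b := by
  have hab : a ≤ b := by simpa using h
  refine le_antisymm ?_ (Finset.le_max' _ _ (by simp [hab]))
  exact Finset.max'_le _ _ _ (fun x hx => (Finset.mem_Icc.mp hx).2)

variable {S : NakSetup}

lemma hs1 (hp2 : S.p = 2) : S.s 1 = 1 := by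
  have h := S.hs_odd 1 le_rfl (by omega) ⟨0, by ring⟩
  norm_num at h; omega

lemma hs2 (hp2 : S.p = 2) : S.s 2 = S.n := by
  have h := S.hs_even 2 (by omega) (by omega) ⟨1, by ring⟩
  have hn := S.hn
  rw [hp2] at hn
  norm_num at h hn
  omega

lemma hnl (hp2 : S.p = 2) : S.l + 1 ≤ S.n := by
  have hn := S.hn
  rw [hp2] at hn
  have hd := S.hd
  have hl := S.hl
  nlinarith [S.hn]

lemma not_odd_two : ¬ Odd (2 : ℤ) := by decide

namespace DL

variable (D : CDatum S)

lemma Xout (hp2 : S.p = 2) (i : ℤ) (hi : i ≠ 2) : D.X i = ∅ := by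
  apply D.hXout i
  rw [hp2]
  omega

lemma lo_ne (hp2 : S.p = 2) (i : ℤ) (hi : i ≠ 2) : D.lo i = S.l := by
  unfold CDatum.lo
  rw [dif_neg]
  rw [Xout D hp2 i hi]
  simp

lemma hi_ne (hp2 : S.p = 2) (i : ℤ) (hi : i ≠ 2) : D.hi i = 0 := by
  unfold CDatum.hi
  rw [dif_neg]
  rw [Xout D hp2 i hi]
  simp

lemma lo2_ge (hp2 : S.p = 2) : 1 ≤ D.lo 2 := by
  unfold CDatum.lo
  split
  · rename_i h
    have := D.hX 2 (Finset.min'_mem _ h)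
    exact (Finset.mem_Icc.mp this).1
  · exact by have := S.hl; omega

lemma hi2_le (hp2 : S.p = 2) : D.hi 2 ≤ S.l - 1 := by
  unfold CDatum.hi
  split
  · rename_i h
    have := D.hX 2 (Finset.max'_mem _ h)
    exact (Finset.mem_Icc.mp this).2
  · have := S.hl; omega

lemma lo2_le_hi2 (hp2 : S.p = 2) (h : (D.X 2).Nonempty) : D.lo 2 ≤ D.hi 2 := by
  unfold CDatum.lo CDatum.hi
  rw [dif_pos h, dif_pos h]
  exact Finset.min'_le _ _ (Finset.max'_mem _ h)

lemma X2_subset (hp2 : S.p = 2) : D.X 2 ⊆ Finset.Icc (D.lo 2) (D.hi 2) := by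
  intro x hx
  have hne : (D.X 2).Nonempty := ⟨x, hx⟩
  unfold CDatum.lo CDatum.hi
  rw [dif_pos hne, dif_pos hne]
  exact Finset.mem_Icc.mpr ⟨Finset.min'_le _ _ hx, Finset.le_max' _ _ hx⟩

lemma lo_of_eq (hp2 : S.p = 2) (a b : ℤ) (hab : a ≤ b) (h : D.X 2 = Finset.Icc a b) : D.lo 2 = a := by
  unfold CDatum.lo
  rw [dif_pos (by rw [h]; exact Finset.nonempty_Icc.mpr hab)]
  simp_rw [h]
  rw [min'_Icc]

lemma hi_of_eq (hp2 : S.p = 2) (a b : ℤ) (hab : a ≤ b) (h : D.X 2 = Finset.Icc a b) : D.hi 2 = b := by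
  unfold CDatum.hi
  rw [dif_pos (by rw [h]; exact Finset.nonempty_Icc.mpr hab)]
  simp_rw [h]
  rw [max'_Icc]

lemma xiLo2 (hp2 : S.p = 2) : D.xiLo 2 = 1 := by
  unfold CDatum.xiLo
  rw [if_neg not_odd_two]
  norm_num [hs1 hp2]

lemma xiHi2 (hp2 : S.p = 2) : D.xiHi 2 = S.n := by
  unfold CDatum.xiHi
  rw [if_pos ⟨1, by ring⟩]
  exact hs2 hp2

lemma Xi20 (hp2 : S.p = 2) : D.Xi 2 0 = Finset.Icc 1 S.n := by
  unfold CDatum.Xi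
  norm_num [xiLo2 D hp2, xiHi2 D hp2]

lemma BigB_eq (hp2 : S.p = 2) : D.BigB = D.BI 2 := by
  unfold CDatum.BigB
  rw [hp2, Finset.Icc_self, Finset.singleton_biUnion]

lemma BigR_eq (hp2 : S.p = 2) : D.BigR = D.RI 2 := by
  unfold CDatum.BigR
  rw [hp2, Finset.Icc_self, Finset.singleton_biUnion]

lemma BI2 (hp2 : S.p = 2) : D.BI 2 = Finset.Icc (S.n - D.hi 2 + 1) S.n := by
  unfold CDatum.BI
  rw [if_neg not_odd_two, hs2 hp2]

lemma RI2 (hp2 : S.p = 2) : D.RI 2 = Finset.Icc 1 (S.l - D.lo 2) := by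
  unfold CDatum.RI
  rw [if_neg not_odd_two]
  norm_num [hs1 hp2]

lemma count_eq (hp2 : S.p = 2) : D.count = (D.R.card : ℤ) + D.B.card + (D.X 2).card := by
  unfold CDatum.count
  rw [hp2, Finset.Icc_self, Finset.sum_singleton]
  rfl

end DL

end Stmt18Aux
namespace Stmt18Aux

open Finset

variable {S : NakSetup}

lemma CDatum.ext' (D E : CDatum S) (h1 : D.X = E.X) (h2 : D.R = E.R) (h3 : D.B = E.B) :
    D = E := by
  cases D; cases E
  simp_all

/-- The `t`-th vertex of the cycle. -/
noncomputable def vdata (S : NakSetup) (hp2 : S.p = 2) (t : ℤ) : CDatum S where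
  X i := if i = 2 then
    Finset.Icc (max 1 (S.n + S.l - t)) (min (S.l - 1) (2 * S.n + S.l - 1 - t)) else ∅
  R := Finset.Icc (max 1 (t - S.n + 1)) (min t S.n)
  B := if t ≤ S.n then Finset.Icc (max 1 (t + 1)) S.n
       else Finset.Icc 1 (min S.n (t - S.n - S.l + 1))
  hX := by
    intro i
    split
    · intro x hx
      simp only [Finset.mem_Icc] at hx ⊢
      omega
    · simp
  hXout := by
    intro i hi
    rw [if_neg]
    rw [hp2] at hi
    omega
  hR := by
    intro x hx
    simp only [Finset.mem_Icc] at hx ⊢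
    omega
  hB := by
    have := hnl hp2
    split <;> intro x hx <;> simp only [Finset.mem_Icc] at hx ⊢ <;> omega
  hRB := by
    have := S.hl
    rw [Finset.disjoint_left]
    intro a ha hb
    split at hb <;> simp only [Finset.mem_Icc] at ha hb <;> omega

section vdata

variable (hp2 : S.p = 2) (t : ℤ)

lemma vdata_X2 : (vdata S hp2 t).X 2 =
    Finset.Icc (max 1 (S.n + S.l - t)) (min (S.l - 1) (2 * S.n + S.l - 1 - t)) := by
  simp [vdata]

lemma vdata_R : (vdata S hp2 t).R = Finset.Icc (max 1 (t - S.n + 1)) (min t S.n) := rfl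

lemma vdata_B_le (h : t ≤ S.n) :
    (vdata S hp2 t).B = Finset.Icc (max 1 (t + 1)) S.n := by
  simp [vdata, h]

lemma vdata_B_gt (h : ¬ t ≤ S.n) :
    (vdata S hp2 t).B = Finset.Icc 1 (min S.n (t - S.n - S.l + 1)) := by
  simp [vdata, h]

end vdata

namespace DL

variable (D : CDatum S)

/-- Parts (b1) and (b2) of rigidity are automatic when `p = 2`; rigidity reduces to
(a) and (b3) at `i = 2`. -/
lemma rigid_of (hp2 : S.p = 2)
    (ha : ∀ x ∈ D.B, ∀ y ∈ D.R, x < y →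
      ∃ z, x < z ∧ z + S.l - 2 < y ∧ Finset.Icc z (z + S.l - 2) ∩ (D.R ∪ D.B) = ∅)
    (hr : D.R ∩ D.RI 2 = ∅) (hb : D.B ∩ D.BI 2 = ∅) : D.Rigid := by
  refine ⟨ha, ?_, ?_, ?_⟩
  · intro i h2 hp hodd
    rw [hp2] at hp
    have : i = 2 := by omega
    subst this
    exact absurd hodd not_odd_two
  · intro i h2 hp _
    rw [hp2] at hp
    have : i = 2 := by omega
    subst this
    have e1 : D.hi 3 = 0 := hi_ne D hp2 3 (by norm_num)
    have e2 : D.lo 1 = S.l := lo_ne D hp2 1 (by norm_num)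
    have e3 := hi2_le D hp2
    have e4 := lo2_ge D hp2
    norm_num
    constructor <;> omega
  · intro i h2 hp
    rw [hp2] at hp
    have : i = 2 := by omega
    subst this
    exact ⟨hr, hb⟩

lemma isRigidI_empty (hp2 : S.p = 2) : D.IsRigidI (∅ : Finset ℤ) := by
  constructor <;> simp

lemma isSupport_empty (hp2 : S.p = 2) : D.IsSupport (∅ : Finset ℤ) := by
  constructor <;> simp

lemma block_eq (hp2 : S.p = 2) (a b : ℤ) (h : D.IsBlock a b) : a = 2 ∧ b = 2 := by
  obtain ⟨h1, h2, h3, _, _, _⟩ := h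
  rw [hp2] at h2
  omega

lemma consec_false (hp2 : S.p = 2) (a b a' b' : ℤ) (h : D.ConsecBlocks a b a' b') : False := by
  obtain ⟨hb1, hb2, hlt, _⟩ := h
  obtain ⟨e1, e2⟩ := block_eq D hp2 a b hb1
  obtain ⟨e3, e4⟩ := block_eq D hp2 a' b' hb2
  omega

lemma wc_of (hp2 : S.p = 2) (hne : (D.X 2).Nonempty)
    (hadm : D.Admissible 2 0) (hfull : D.Full 2 0) : D.WellConfigured := by
  right
  have h20 : (2 : ℤ) ≤ S.p := by omega
  refine ⟨⟨2, ?_⟩, ?_, ?_, ?_, ?_, ?_, ?_, ?_, ?_, ?_⟩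
  · simp only [CDatum.T, Finset.mem_filter, Finset.mem_Icc]
    exact ⟨⟨le_refl 2, h20⟩, hne⟩
  · intro a b hblock
    obtain ⟨e1, e2⟩ := block_eq D hp2 a b hblock
    subst e1; subst e2
    norm_num
    exact ⟨hadm, hfull⟩
  · intro a b a' b' h
    exact absurd h (by intro h; exact consec_false D hp2 _ _ _ _ h)
  · intro a b hfb
    obtain ⟨e1, _⟩ := block_eq D hp2 a b hfb.1
    subst e1
    rw [xiLo2 D hp2]
    norm_num
    exact Or.inl (isRigidI_empty D hp2)
  · intro a b a' b' h
    exact absurd h (by intro h; exact consec_false D hp2 _ _ _ _ h)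
  · intro a b hlb
    obtain ⟨_, e2⟩ := block_eq D hp2 a b hlb.1
    subst e2
    rw [xiHi2 D hp2]
    rw [Finset.Icc_eq_empty (by omega)]
    exact Or.inl (isRigidI_empty D hp2)
  · intro a b hfb _
    obtain ⟨e1, _⟩ := block_eq D hp2 a b hfb.1
    subst e1
    rw [xiLo2 D hp2]
    norm_num
    exact Or.inl (isRigidI_empty D hp2)
  · intro a b a' b' h
    exact absurd h (by intro h; exact consec_false D hp2 _ _ _ _ h)
  · intro a b a' b' h
    exact absurd h (by intro h; exact consec_false D hp2 _ _ _ _ h)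
  · intro a b hlb _
    obtain ⟨_, e2⟩ := block_eq D hp2 a b hlb.1
    subst e2
    rw [xiHi2 D hp2]
    rw [Finset.Icc_eq_empty (by omega)]
    exact Or.inl (isSupport_empty D hp2)

lemma wc_to_adm (hp2 : S.p = 2) (hne : (D.X 2).Nonempty) (h : D.WellConfigured) :
    D.Admissible 2 0 ∧ D.Full 2 0 := by
  have hblock : D.IsBlock 2 2 := by
    refine ⟨le_refl 2, by omega, le_refl 2, ?_, ?_, ?_⟩
    · intro j h1 h2
      have : j = 2 := by omega
      subst this; exact hne
    · exact Xout D hp2 1 (by norm_num)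
    · exact Xout D hp2 3 (by norm_num)
  rcases h with ⟨hT, _⟩ | ⟨_, hcl, _⟩
  · exfalso
    have : (2 : ℤ) ∈ D.T := by
      simp only [CDatum.T, Finset.mem_filter, Finset.mem_Icc]
      exact ⟨⟨le_refl 2, by omega⟩, hne⟩
    rw [hT] at this
    simp at this
  · have := hcl 2 2 hblock
    norm_num at this
    exact this

end DL

end Stmt18Aux
namespace Stmt18Aux

open Finset

variable {S : NakSetup}

section vdata2

variable (hp2 : S.p = 2) (t : ℤ)

lemma vdata_X2_ne (h1 : S.n + 1 ≤ t) (h2 : t ≤ 2 * S.n + S.l - 2) :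
    ((vdata S hp2 t).X 2).Nonempty := by
  have hl := S.hl
  have hn := hnl hp2
  rw [vdata_X2]
  exact Finset.nonempty_Icc.mpr (by omega)

lemma vdata_X2_empty (h : t ≤ S.n) : (vdata S hp2 t).X 2 = ∅ := by
  have hl := S.hl
  have hn := hnl hp2
  rw [vdata_X2]
  exact Finset.Icc_eq_empty (by omega)

lemma vdata_lo (h1 : S.n + 1 ≤ t) (h2 : t ≤ 2 * S.n + S.l - 2) :
    (vdata S hp2 t).lo 2 = max 1 (S.n + S.l - t) := by
  have hl := S.hl
  have hn := hnl hp2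
  exact DL.lo_of_eq _ hp2 _ _ (by omega) (vdata_X2 hp2 t)

lemma vdata_hi (h1 : S.n + 1 ≤ t) (h2 : t ≤ 2 * S.n + S.l - 2) :
    (vdata S hp2 t).hi 2 = min (S.l - 1) (2 * S.n + S.l - 1 - t) := by
  have hl := S.hl
  have hn := hnl hp2
  exact DL.hi_of_eq _ hp2 _ _ (by omega) (vdata_X2 hp2 t)

lemma vdata_wc (h0 : 0 ≤ t) (h1 : t ≤ 2 * S.n + S.l - 2) :
    (vdata S hp2 t).WellConfigured := by
  have hl := S.hl
  have hn := hnl hp2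
  by_cases ht : t ≤ S.n
  · -- no diagonal summands: the pair (R, B) = ([1,t], [t+1,n])
    left
    constructor
    · simp only [CDatum.T, Finset.filter_eq_empty_iff, Finset.mem_Icc]
      intro i hi
      have : i = 2 := by omega
      subst this
      rw [vdata_X2_empty hp2 t ht]
      simp
    · refine ⟨t, h0, ht, ?_, ?_⟩
      · rw [vdata_R, show max 1 (t - S.n + 1) = 1 by omega, show min t S.n = t by omega]
      · rw [vdata_B_le hp2 t ht, show max 1 (t + 1) = t + 1 by omega]
  · push_neg at ht
    set D₀ := vdata S hp2 t with hD₀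
    have hne : (D₀.X 2).Nonempty := vdata_X2_ne hp2 t (by omega) h1
    have hlo : D₀.lo 2 = max 1 (S.n + S.l - t) := vdata_lo hp2 t (by omega) h1
    have hhi : D₀.hi 2 = min (S.l - 1) (2 * S.n + S.l - 1 - t) := vdata_hi hp2 t (by omega) h1
    refine DL.wc_of D₀ hp2 hne ?_ ?_
    · -- Admissible 2 0
      refine ⟨le_rfl, by omega, le_rfl, ?_, ?_⟩
      · intro j hj0 hjk
        have : j = 0 := by omega
        subst this
        norm_num
        exact hne
      · -- the case disjunction
        by_cases c1 : t ≤ S.n + S.l - 2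
        · -- type II
          refine Or.inr (Or.inl ⟨rfl, by omega, by omega, ?_, ?_⟩)
          · rw [DL.Xi20 D₀ hp2, hD₀, vdata_B_gt hp2 t (by omega),
              Finset.Icc_eq_empty (by omega), Finset.empty_inter]
          · rw [DL.Xi20 D₀ hp2, DL.BigR_eq D₀ hp2, DL.RI2 D₀ hp2, hlo]
            rw [hD₀, vdata_R]
            ext y
            simp only [Finset.mem_inter, Finset.mem_Icc, Finset.mem_sdiff]
            omega
        · by_cases c2 : t = S.n + S.l - 1
          · -- type III, rigid
            refine Or.inr (Or.inr (Or.inl ⟨rfl, by omega, by omega,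
              Or.inr (Or.inl ⟨?_, ?_⟩)⟩))
            · rw [DL.Xi20 D₀ hp2, hD₀, vdata_B_gt hp2 t (by omega),
                Finset.Icc_eq_empty (by omega), Finset.empty_inter]
            · rw [DL.Xi20 D₀ hp2, DL.BigR_eq D₀ hp2, DL.RI2 D₀ hp2, hlo]
              rw [hD₀, vdata_R]
              ext y
              simp only [Finset.mem_inter, Finset.mem_Icc, Finset.mem_sdiff]
              omega
          · by_cases c3 : t ≤ 2 * S.n - 1
            · -- type III, support to rigid at x = t - n - l + 1
              refine Or.inr (Or.inr (Or.inl ⟨rfl, by omega, by omega,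
                Or.inr (Or.inr ⟨t - S.n - S.l + 1, ?_, ?_, ?_, ?_, ?_, ?_⟩)⟩))
              · rw [DL.Xi20 D₀ hp2, DL.BI2 D₀ hp2, hhi]
                simp only [Finset.mem_sdiff, Finset.mem_Icc]
                omega
              · rw [DL.Xi20 D₀ hp2]
                simp only [Finset.mem_Icc]
                omega
              · rw [DL.Xi20 D₀ hp2, hD₀, vdata_B_gt hp2 t (by omega)]
                ext y
                simp only [Finset.mem_inter, Finset.mem_Icc, Finset.mem_filter]
                omega
              · refine ⟨1, ?_⟩
                rw [DL.Xi20 D₀ hp2, hD₀, vdata_B_gt hp2 t (by omega)]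
                simp only [Finset.mem_inter, Finset.mem_Icc]
                omega
              · rw [DL.Xi20 D₀ hp2, hD₀, vdata_R]
                ext y
                simp only [Finset.mem_inter, Finset.mem_Icc, Finset.mem_filter]
                omega
              · refine ⟨S.n, ?_⟩
                rw [DL.Xi20 D₀ hp2, hD₀, vdata_R]
                simp only [Finset.mem_inter, Finset.mem_Icc]
                omega
            · by_cases c4 : t = 2 * S.n
              · -- type III, support
                refine Or.inr (Or.inr (Or.inl ⟨rfl, by omega, by omega,
                  Or.inl ⟨?_, ?_⟩⟩))
                · rw [DL.Xi20 D₀ hp2, hD₀, vdata_R,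
                    Finset.Icc_eq_empty (by omega), Finset.empty_inter]
                · rw [DL.Xi20 D₀ hp2, DL.BigB_eq D₀ hp2, DL.BI2 D₀ hp2, hhi]
                  rw [hD₀, vdata_B_gt hp2 t (by omega)]
                  ext y
                  simp only [Finset.mem_inter, Finset.mem_Icc, Finset.mem_sdiff]
                  omega
              · -- type I, support
                refine Or.inl ⟨rfl, by omega, by omega, ?_, ?_⟩
                · rw [DL.Xi20 D₀ hp2, hD₀, vdata_R,
                    Finset.Icc_eq_empty (by omega), Finset.empty_inter]
                · rw [DL.Xi20 D₀ hp2, DL.BigB_eq D₀ hp2, DL.BI2 D₀ hp2, hhi]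
                  rw [hD₀, vdata_B_gt hp2 t (by omega)]
                  ext y
                  simp only [Finset.mem_inter, Finset.mem_Icc, Finset.mem_sdiff]
                  omega
    · -- Full 2 0
      intro j hj0 hjk
      have : j = 0 := by omega
      subst this
      norm_num
      unfold CDatum.m
      rw [hlo, hhi, hD₀, vdata_X2, icc_card]
      omega

end vdata2

end Stmt18Aux
namespace Stmt18Aux

open Finset

variable {S : NakSetup}

lemma wc_classify (D : CDatum S) (hp2 : S.p = 2) (h : D.WellConfigured) :
    ∃ t, 0 ≤ t ∧ t ≤ 2 * S.n + S.l - 2 ∧ D = vdata S hp2 t := by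
  have hl := S.hl
  have hn := hnl hp2
  have hRI : D.R ∩ Finset.Icc 1 S.n = D.R := Finset.inter_eq_left.mpr D.hR
  have hBI : D.B ∩ Finset.Icc 1 S.n = D.B := Finset.inter_eq_left.mpr D.hB
  by_cases hne : (D.X 2).Nonempty
  · obtain ⟨hadm, hfull⟩ := DL.wc_to_adm D hp2 hne h
    have hlo1 := DL.lo2_ge D hp2
    have hhi1 := DL.hi2_le D hp2
    have hlohi := DL.lo2_le_hi2 D hp2 hne
    have hm := hfull 0 le_rfl le_rfl
    norm_num at hm
    have hXe : D.X 2 = Finset.Icc (D.lo 2) (D.hi 2) := by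
      apply Finset.eq_of_subset_of_card_le (DL.X2_subset D hp2)
      have h1 : ((Finset.Icc (D.lo 2) (D.hi 2)).card : ℤ) = D.hi 2 - D.lo 2 + 1 := by
        rw [icc_card]; omega
      have h2 : ((D.X 2).card : ℤ) = D.hi 2 - D.lo 2 + 1 := hm
      omega
    have hdisj := hadm.2.2.2.2
    have hext : ∀ (a b : ℤ), D.R = Finset.Icc a b → D.B = Finset.Icc 1 (S.n) \ Finset.Icc 1 0 → True := fun _ _ _ _ => trivial
    rcases hdisj with ⟨_, hlo, hhi, hsup⟩ | ⟨_, hlo, hhi, hrig⟩ |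
      ⟨_, hlo, hhi, hopt⟩ | ⟨h01, _⟩ | ⟨h01, _⟩ | ⟨h01, _⟩ | ⟨h01, _⟩ | ⟨h01, _⟩
    · -- type I : t = 2n + l - 1 - hi
      rw [DL.Xi20 D hp2] at hsup
      obtain ⟨hR0, hBe⟩ := hsup
      rw [hRI] at hR0
      rw [hBI, DL.BigB_eq D hp2, DL.BI2 D hp2] at hBe
      refine ⟨2 * S.n + S.l - 1 - D.hi 2, by omega, by omega, ?_⟩
      apply CDatum.ext'
      · funext i
        by_cases hi2 : i = 2
        · subst hi2
          rw [vdata_X2, hXe, hlo,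
            show max 1 (S.n + S.l - (2 * S.n + S.l - 1 - D.hi 2)) = 1 by omega,
            show min (S.l - 1) (2 * S.n + S.l - 1 - (2 * S.n + S.l - 1 - D.hi 2)) = D.hi 2 by omega]
        · rw [DL.Xout D hp2 i hi2, DL.Xout (vdata S hp2 _) hp2 i hi2]
      · rw [vdata_R, hR0]
        symm
        exact Finset.Icc_eq_empty (by omega)
      · rw [vdata_B_gt hp2 _ (by omega), hBe]
        ext y
        simp only [Finset.mem_Icc, Finset.mem_sdiff]
        omega
    · -- type II : t = n + l - lo
      rw [DL.Xi20 D hp2] at hrig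
      obtain ⟨hB0, hRe⟩ := hrig
      rw [hBI] at hB0
      rw [hRI, DL.BigR_eq D hp2, DL.RI2 D hp2] at hRe
      refine ⟨S.n + S.l - D.lo 2, by omega, by omega, ?_⟩
      apply CDatum.ext'
      · funext i
        by_cases hi2 : i = 2
        · subst hi2
          rw [vdata_X2, hXe, hhi,
            show max 1 (S.n + S.l - (S.n + S.l - D.lo 2)) = D.lo 2 by omega,
            show min (S.l - 1) (2 * S.n + S.l - 1 - (S.n + S.l - D.lo 2)) = S.l - 1 by omega]
        · rw [DL.Xout D hp2 i hi2, DL.Xout (vdata S hp2 _) hp2 i hi2]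
      · rw [vdata_R, hRe]
        ext y
        simp only [Finset.mem_Icc, Finset.mem_sdiff]
        omega
      · rw [vdata_B_gt hp2 _ (by omega), hB0]
        symm
        exact Finset.Icc_eq_empty (by omega)
    · -- type III
      rw [DL.Xi20 D hp2] at hopt
      rcases hopt with ⟨hR0, hBe⟩ | ⟨hB0, hRe⟩ | ⟨x, hxmem, hxI, hBf, hBne, hRf, hRne⟩
      · -- support : t = 2n
        rw [hRI] at hR0
        rw [hBI, DL.BigB_eq D hp2, DL.BI2 D hp2, hhi] at hBe
        refine ⟨2 * S.n, by omega, by omega, ?_⟩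
        apply CDatum.ext'
        · funext i
          by_cases hi2 : i = 2
          · subst hi2
            rw [vdata_X2, hXe, hhi, hlo,
              show max 1 (S.n + S.l - 2 * S.n) = 1 by omega,
              show min (S.l - 1) (2 * S.n + S.l - 1 - 2 * S.n) = S.l - 1 by omega]
          · rw [DL.Xout D hp2 i hi2, DL.Xout (vdata S hp2 _) hp2 i hi2]
        · rw [vdata_R, hR0]
          symm
          exact Finset.Icc_eq_empty (by omega)
        · rw [vdata_B_gt hp2 _ (by omega), hBe]
          ext y
          simp only [Finset.mem_Icc, Finset.mem_sdiff]
          omega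
      · -- rigid : t = n + l - 1
        rw [hBI] at hB0
        rw [hRI, DL.BigR_eq D hp2, DL.RI2 D hp2, hlo] at hRe
        refine ⟨S.n + S.l - 1, by omega, by omega, ?_⟩
        apply CDatum.ext'
        · funext i
          by_cases hi2 : i = 2
          · subst hi2
            rw [vdata_X2, hXe, hhi, hlo,
              show max 1 (S.n + S.l - (S.n + S.l - 1)) = 1 by omega,
              show min (S.l - 1) (2 * S.n + S.l - 1 - (S.n + S.l - 1)) = S.l - 1 by omega]
          · rw [DL.Xout D hp2 i hi2, DL.Xout (vdata S hp2 _) hp2 i hi2]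
        · rw [vdata_R, hRe]
          ext y
          simp only [Finset.mem_Icc, Finset.mem_sdiff]
          omega
        · rw [vdata_B_gt hp2 _ (by omega), hB0]
          symm
          exact Finset.Icc_eq_empty (by omega)
      · -- support to rigid at x : t = n + l - 1 + x
        rw [DL.BI2 D hp2, hhi] at hxmem
        simp only [Finset.mem_sdiff, Finset.mem_Icc] at hxmem
        rw [hBI] at hBf
        rw [hRI] at hRf
        have hBx : D.B = Finset.Icc 1 x := by
          rw [hBf]
          ext y
          simp only [Finset.mem_filter, Finset.mem_Icc]
          omega
        have hRx : D.R = Finset.Icc (x + S.l) S.n := by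
          rw [hRf]
          ext y
          simp only [Finset.mem_filter, Finset.mem_Icc]
          omega
        have hxn : x + S.l ≤ S.n := by
          obtain ⟨y, hy⟩ := hRne
          rw [hRI, hRx] at hy
          simp only [Finset.mem_Icc] at hy
          omega
        refine ⟨S.n + S.l - 1 + x, by omega, by omega, ?_⟩
        apply CDatum.ext'
        · funext i
          by_cases hi2 : i = 2
          · subst hi2
            rw [vdata_X2, hXe, hhi, hlo,
              show max 1 (S.n + S.l - (S.n + S.l - 1 + x)) = 1 by omega,
              show min (S.l - 1) (2 * S.n + S.l - 1 - (S.n + S.l - 1 + x)) = S.l - 1 by omega]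
          · rw [DL.Xout D hp2 i hi2, DL.Xout (vdata S hp2 _) hp2 i hi2]
        · rw [vdata_R, hRx]
          rw [show max 1 (S.n + S.l - 1 + x - S.n + 1) = x + S.l by omega,
            show min (S.n + S.l - 1 + x) S.n = S.n by omega]
        · rw [vdata_B_gt hp2 _ (by omega), hBx]
          rw [show min S.n (S.n + S.l - 1 + x - S.n - S.l + 1) = x by omega]
    · exact absurd h01 (by norm_num)
    · exact absurd h01 (by norm_num)
    · exact absurd h01 (by norm_num)
    · exact absurd h01 (by norm_num)
    · exact absurd h01 (by norm_num)
  · -- T = ∅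
    rcases h with ⟨_, x, hx0, hxn, hRx, hBx⟩ | ⟨⟨i, hi⟩, _⟩
    · refine ⟨x, hx0, by omega, ?_⟩
      apply CDatum.ext'
      · funext i
        by_cases hi2 : i = 2
        · subst hi2
          rw [vdata_X2_empty hp2 x hxn]
          rw [Finset.not_nonempty_iff_eq_empty] at hne
          exact hne
        · rw [DL.Xout D hp2 i hi2, DL.Xout (vdata S hp2 _) hp2 i hi2]
      · rw [vdata_R, hRx,
          show max 1 (x - S.n + 1) = 1 by omega, show min x S.n = x by omega]
      · rw [vdata_B_le hp2 x hxn, hBx, show max 1 (x + 1) = x + 1 by omega]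
    · exfalso
      simp only [CDatum.T, Finset.mem_filter, Finset.mem_Icc] at hi
      have : i = 2 := by omega
      subst this
      exact hne hi.2

end Stmt18Aux
namespace Stmt18Aux

open Finset

variable {S : NakSetup}

lemma vdata_inj (hp2 : S.p = 2) (t t' : ℤ) (h0 : 0 ≤ t) (h1 : t ≤ 2 * S.n + S.l - 2)
    (h0' : 0 ≤ t') (h1' : t' ≤ 2 * S.n + S.l - 2)
    (h : vdata S hp2 t = vdata S hp2 t') : t = t' := by
  have hl := S.hl
  have hn := hnl hp2
  have hX : Finset.Icc (max 1 (S.n + S.l - t)) (min (S.l - 1) (2 * S.n + S.l - 1 - t)) =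
      Finset.Icc (max 1 (S.n + S.l - t')) (min (S.l - 1) (2 * S.n + S.l - 1 - t')) := by
    rw [← vdata_X2 hp2 t, ← vdata_X2 hp2 t', h]
  have hR : Finset.Icc (max 1 (t - S.n + 1)) (min t S.n) =
      Finset.Icc (max 1 (t' - S.n + 1)) (min t' S.n) := by
    rw [← vdata_R hp2 t, ← vdata_R hp2 t', h]
  by_cases ht : t ≤ S.n <;> by_cases ht' : t' ≤ S.n
  · have e1 := Finset.ext_iff.mp hR t
    have e2 := Finset.ext_iff.mp hR t'
    simp only [Finset.mem_Icc] at e1 e2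
    omega
  · have e := Finset.ext_iff.mp hX (max 1 (S.n + S.l - t'))
    simp only [Finset.mem_Icc] at e
    omega
  · have e := Finset.ext_iff.mp hX (max 1 (S.n + S.l - t))
    simp only [Finset.mem_Icc] at e
    omega
  · have hB : Finset.Icc 1 (min S.n (t - S.n - S.l + 1)) =
        Finset.Icc 1 (min S.n (t' - S.n - S.l + 1)) := by
      rw [← vdata_B_gt hp2 t ht, ← vdata_B_gt hp2 t' ht', h]
    have e1 := Finset.ext_iff.mp hR (t - S.n + 1)
    have e2 := Finset.ext_iff.mp hR (t' - S.n + 1)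
    have e3 := Finset.ext_iff.mp hB (t - S.n - S.l + 1)
    have e4 := Finset.ext_iff.mp hB (t' - S.n - S.l + 1)
    simp only [Finset.mem_Icc] at e1 e2 e3 e4
    omega

end Stmt18Aux
namespace Stmt18Aux

open Finset

variable {S : NakSetup}

/-- The common rigid sub-datum of the `t`-th and `(t+1)`-st vertices. -/
noncomputable def edata (S : NakSetup) (hp2 : S.p = 2) (t : ℤ) : CDatum S where
  X i := if i = 2 then
    Finset.Icc (max 1 (S.n + S.l - t)) (min (S.l - 1) (2 * S.n + S.l - 2 - t)) else ∅
  R := Finset.Icc (max 1 (t - S.n + 2)) (min t S.n)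
  B := if t + 1 ≤ S.n then Finset.Icc (max 1 (t + 2)) S.n
       else Finset.Icc 1 (min S.n (t - S.n - S.l + 1))
  hX := by
    intro i
    split
    · intro x hx
      simp only [Finset.mem_Icc] at hx ⊢
      omega
    · simp
  hXout := by
    intro i hi
    rw [if_neg]
    rw [hp2] at hi
    omega
  hR := by
    intro x hx
    simp only [Finset.mem_Icc] at hx ⊢
    omega
  hB := by
    have := hnl hp2
    split <;> intro x hx <;> simp only [Finset.mem_Icc] at hx ⊢ <;> omega
  hRB := by
    have := S.hl
    rw [Finset.disjoint_left]
    intro a ha hb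
    split at hb <;> simp only [Finset.mem_Icc] at ha hb <;> omega

section edata

variable (hp2 : S.p = 2) (t : ℤ)

lemma edata_X2 : (edata S hp2 t).X 2 =
    Finset.Icc (max 1 (S.n + S.l - t)) (min (S.l - 1) (2 * S.n + S.l - 2 - t)) := by
  simp [edata]

lemma edata_R : (edata S hp2 t).R = Finset.Icc (max 1 (t - S.n + 2)) (min t S.n) := rfl

lemma edata_B_le (h : t + 1 ≤ S.n) :
    (edata S hp2 t).B = Finset.Icc (max 1 (t + 2)) S.n := by
  simp [edata, h]

lemma edata_B_gt (h : ¬ t + 1 ≤ S.n) :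
    (edata S hp2 t).B = Finset.Icc 1 (min S.n (t - S.n - S.l + 1)) := by
  simp [edata, h]

lemma edata_count (h0 : 0 ≤ t) (h1 : t ≤ 2 * S.n + S.l - 2) :
    (edata S hp2 t).count = S.n - 1 := by
  have hl := S.hl
  have hn := hnl hp2
  rw [DL.count_eq _ hp2]
  unfold CDatum.m at *
  by_cases hc : t + 1 ≤ S.n
  · rw [edata_B_le hp2 t hc, edata_R, edata_X2, icc_card, icc_card, icc_card]
    omega
  · rw [edata_B_gt hp2 t hc, edata_R, edata_X2, icc_card, icc_card, icc_card]
    omega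

lemma edata_rigid (h0 : 0 ≤ t) (h1 : t ≤ 2 * S.n + S.l - 2) :
    (edata S hp2 t).Rigid := by
  have hl := S.hl
  have hn := hnl hp2
  apply DL.rigid_of _ hp2
  · -- condition (a)
    intro x hx y hy hlt
    by_cases hc : t + 1 ≤ S.n
    · exfalso
      rw [edata_B_le hp2 t hc] at hx
      rw [edata_R] at hy
      simp only [Finset.mem_Icc] at hx hy
      omega
    · rw [edata_B_gt hp2 t hc] at hx
      rw [edata_R] at hy
      simp only [Finset.mem_Icc] at hx hy
      refine ⟨t - S.n - S.l + 2, by omega, by omega, ?_⟩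
      ext w
      simp only [Finset.mem_inter, Finset.mem_union, Finset.mem_Icc,
        Finset.notMem_empty, iff_false, not_and, edata_R]
      rw [edata_B_gt hp2 t hc]
      simp only [Finset.mem_union, Finset.mem_Icc]
      omega
  · -- R ∩ RI 2 = ∅
    by_cases hne : ((edata S hp2 t).X 2).Nonempty
    · have hrange : S.n + 1 ≤ t ∧ t ≤ 2 * S.n + S.l - 3 := by
        rw [edata_X2] at hne
        have := Finset.nonempty_Icc.mp hne
        omega
      have hlo : (edata S hp2 t).lo 2 = max 1 (S.n + S.l - t) :=
        DL.lo_of_eq _ hp2 _ _ (by omega) (edata_X2 hp2 t)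
      rw [DL.RI2 _ hp2, hlo, edata_R]
      ext y
      simp only [Finset.mem_inter, Finset.mem_Icc, Finset.notMem_empty, iff_false, not_and]
      omega
    · have hlo : (edata S hp2 t).lo 2 = S.l := by
        unfold CDatum.lo
        rw [dif_neg hne]
      rw [DL.RI2 _ hp2, hlo, Finset.Icc_eq_empty (by omega), Finset.inter_empty]
  · -- B ∩ BI 2 = ∅
    by_cases hne : ((edata S hp2 t).X 2).Nonempty
    · have hrange : S.n + 1 ≤ t ∧ t ≤ 2 * S.n + S.l - 3 := by
        rw [edata_X2] at hne
        have := Finset.nonempty_Icc.mp hne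
        omega
      have hhi : (edata S hp2 t).hi 2 = min (S.l - 1) (2 * S.n + S.l - 2 - t) :=
        DL.hi_of_eq _ hp2 _ _ (by omega) (edata_X2 hp2 t)
      rw [DL.BI2 _ hp2, hhi, edata_B_gt hp2 t (by omega)]
      ext y
      simp only [Finset.mem_inter, Finset.mem_Icc, Finset.notMem_empty, iff_false, not_and]
      omega
    · have hhi : (edata S hp2 t).hi 2 = 0 := by
        unfold CDatum.hi
        rw [dif_neg hne]
      rw [DL.BI2 _ hp2, hhi, Finset.Icc_eq_empty (by omega), Finset.inter_empty]

lemma edata_sub_X (t' : ℤ) (h1 : t' = t + 1 ∨ (t = 2 * S.n + S.l - 2 ∧ t' = 0)) :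
    ∀ i, (edata S hp2 t).X i ⊆ (vdata S hp2 t).X i ∩ (vdata S hp2 t').X i := by
  have hl := S.hl
  have hn := hnl hp2
  intro i x hx
  rw [Finset.mem_inter]
  by_cases hi2 : i = 2
  · subst hi2
    rw [edata_X2] at hx
    rw [vdata_X2, vdata_X2]
    simp only [Finset.mem_Icc] at hx ⊢
    omega
  · rw [DL.Xout _ hp2 i hi2] at hx
    simp at hx

lemma edata_sub_R (t' : ℤ) (h1 : t' = t + 1 ∨ (t = 2 * S.n + S.l - 2 ∧ t' = 0)) :
    (edata S hp2 t).R ⊆ (vdata S hp2 t).R ∩ (vdata S hp2 t').R := by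
  have hl := S.hl
  have hn := hnl hp2
  intro x hx
  rw [Finset.mem_inter]
  rw [edata_R] at hx
  rw [vdata_R, vdata_R]
  simp only [Finset.mem_Icc] at hx ⊢
  omega

lemma edata_sub_B (t' : ℤ) (h0 : 0 ≤ t) (h1 : t' = t + 1 ∨ (t = 2 * S.n + S.l - 2 ∧ t' = 0)) :
    (edata S hp2 t).B ⊆ (vdata S hp2 t).B ∩ (vdata S hp2 t').B := by
  have hl := S.hl
  have hn := hnl hp2
  intro x hx
  rw [Finset.mem_inter]
  constructor
  · by_cases hc : t ≤ S.n
    · rw [vdata_B_le hp2 t hc]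
      by_cases hc' : t + 1 ≤ S.n
      · rw [edata_B_le hp2 t hc'] at hx
        simp only [Finset.mem_Icc] at hx ⊢
        omega
      · rw [edata_B_gt hp2 t hc'] at hx
        simp only [Finset.mem_Icc] at hx ⊢
        omega
    · rw [vdata_B_gt hp2 t hc]
      rw [edata_B_gt hp2 t (by omega)] at hx
      simp only [Finset.mem_Icc] at hx ⊢
      omega
  · by_cases hc : t' ≤ S.n
    · rw [vdata_B_le hp2 t' hc]
      by_cases hc' : t + 1 ≤ S.n
      · rw [edata_B_le hp2 t hc'] at hx
        simp only [Finset.mem_Icc] at hx ⊢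
        omega
      · rw [edata_B_gt hp2 t hc'] at hx
        simp only [Finset.mem_Icc] at hx ⊢
        omega
    · rw [vdata_B_gt hp2 t' hc]
      by_cases hc' : t + 1 ≤ S.n
      · rw [edata_B_le hp2 t hc'] at hx
        simp only [Finset.mem_Icc] at hx ⊢
        omega
      · rw [edata_B_gt hp2 t hc'] at hx
        simp only [Finset.mem_Icc] at hx ⊢
        omega

end edata

end Stmt18Aux
namespace Stmt18Aux

open Finset

variable {S : NakSetup}

lemma N_big (hp2 : S.p = 2) : 7 ≤ 2 * S.n + S.l - 1 := by
  have hl := S.hl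
  have hn := hnl hp2
  omega

/-- The `t`-th vertex of the mutation graph (cyclically). -/
noncomputable def vert (S : NakSetup) (hp2 : S.p = 2) (t : ℤ) :
    {D : CDatum S // D.WellConfigured} :=
  ⟨vdata S hp2 (t % (2 * S.n + S.l - 1)),
   vdata_wc hp2 _ (Int.emod_nonneg t (by have := N_big hp2; omega))
     (by have := Int.emod_lt_of_pos t (show (0:ℤ) < 2 * S.n + S.l - 1 by have := N_big hp2; omega)
         omega)⟩

lemma vert_val (hp2 : S.p = 2) (t : ℤ) (h0 : 0 ≤ t) (h1 : t ≤ 2 * S.n + S.l - 2) :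
    (vert S hp2 t).1 = vdata S hp2 t := by
  show vdata S hp2 (t % (2 * S.n + S.l - 1)) = vdata S hp2 t
  rw [Int.emod_eq_of_lt h0 (by omega)]

lemma vert_congr (hp2 : S.p = 2) (t t' : ℤ)
    (h : t % (2 * S.n + S.l - 1) = t' % (2 * S.n + S.l - 1)) :
    vert S hp2 t = vert S hp2 t' := by
  apply Subtype.ext
  show vdata S hp2 (t % (2 * S.n + S.l - 1)) = vdata S hp2 (t' % (2 * S.n + S.l - 1))
  rw [h]

lemma adj_of (hp2 : S.p = 2) (u v : {D : CDatum S // D.WellConfigured}) (t t' : ℤ)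
    (hu : u.1 = vdata S hp2 t) (hv : v.1 = vdata S hp2 t')
    (h0 : 0 ≤ t) (h1 : t ≤ 2 * S.n + S.l - 2)
    (h0' : 0 ≤ t') (h1' : t' ≤ 2 * S.n + S.l - 2)
    (hor : t' = t + 1 ∨ (t = 2 * S.n + S.l - 2 ∧ t' = 0)) :
    (mutGraph S).Adj u v := by
  have htne : t ≠ t' := by have := N_big hp2; omega
  change u ≠ v ∧ ∃ F : CDatum S, F.Rigid ∧
    (∀ i, F.X i ⊆ u.1.X i ∩ v.1.X i) ∧ F.R ⊆ u.1.R ∩ v.1.R ∧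
    F.B ⊆ u.1.B ∩ v.1.B ∧ F.count = S.n - 1
  refine ⟨?_, edata S hp2 t, edata_rigid hp2 t h0 h1, ?_, ?_, ?_, edata_count hp2 t h0 h1⟩
  · intro he
    rw [he, hv] at hu
    exact htne (vdata_inj hp2 t t' h0 h1 h0' h1' hu.symm)
  · rw [hu, hv]
    exact edata_sub_X hp2 t t' hor
  · rw [hu, hv]
    exact edata_sub_R hp2 t t' hor
  · rw [hu, hv]
    exact edata_sub_B hp2 t t' h0 hor

lemma adj_succ (hp2 : S.p = 2) (t : ℤ) :
    (mutGraph S).Adj (vert S hp2 t) (vert S hp2 (t + 1)) := by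
  have hN := N_big hp2
  have hNpos : (0:ℤ) < 2 * S.n + S.l - 1 := by omega
  set N := 2 * S.n + S.l - 1 with hNdef
  have ha0 : 0 ≤ t % N := Int.emod_nonneg t (by omega)
  have ha1 : t % N ≤ N - 1 := by
    have := Int.emod_lt_of_pos t hNpos
    omega
  have hsucc : (t + 1) % N = (t % N + 1) % N := by
    rw [Int.add_emod t 1 N, Int.add_emod (t % N) 1 N, Int.emod_emod_of_dvd t dvd_rfl]
  by_cases hc : t % N = N - 1
  · have hb : (t + 1) % N = 0 := by
      rw [hsucc, hc, show N - 1 + 1 = N by ring, Int.emod_self]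
    refine adj_of hp2 _ _ (t % N) 0 rfl ?_ ha0 (by omega) le_rfl (by omega)
      (Or.inr ⟨by omega, rfl⟩)
    show vdata S hp2 ((t + 1) % N) = vdata S hp2 0
    rw [hb]
  · have hb : (t + 1) % N = t % N + 1 := by
      rw [hsucc, Int.emod_eq_of_lt (by omega) (by omega)]
    refine adj_of hp2 _ _ (t % N) (t % N + 1) rfl ?_ ha0 (by omega) (by omega) (by omega)
      (Or.inl rfl)
    show vdata S hp2 ((t + 1) % N) = vdata S hp2 (t % N + 1)
    rw [hb]

lemma adj_to_core (hp2 : S.p = 2) (u v : {D : CDatum S // D.WellConfigured}) (t t' : ℤ)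
    (hu : u.1 = vdata S hp2 t) (hv : v.1 = vdata S hp2 t')
    (h0 : 0 ≤ t) (h0' : 0 ≤ t') (h1' : t' ≤ 2 * S.n + S.l - 2)
    (hlt : t < t')
    (h : (mutGraph S).Adj u v) :
    t' = t + 1 ∨ (t = 0 ∧ t' = 2 * S.n + S.l - 2) := by
  have hl := S.hl
  have hn := hnl hp2
  change u ≠ v ∧ ∃ F : CDatum S, F.Rigid ∧
    (∀ i, F.X i ⊆ u.1.X i ∩ v.1.X i) ∧ F.R ⊆ u.1.R ∩ v.1.R ∧
    F.B ⊆ u.1.B ∩ v.1.B ∧ F.count = S.n - 1 at h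
  obtain ⟨hne, F, _, hXs, hRs, hBs, hcnt⟩ := h
  rw [hu, hv] at hXs hRs hBs
  have c1 : (F.X 2).card ≤ ((vdata S hp2 t).X 2 ∩ (vdata S hp2 t').X 2).card :=
    Finset.card_le_card (hXs 2)
  have c2 : F.R.card ≤ ((vdata S hp2 t).R ∩ (vdata S hp2 t').R).card :=
    Finset.card_le_card hRs
  have c3 : F.B.card ≤ ((vdata S hp2 t).B ∩ (vdata S hp2 t').B).card :=
    Finset.card_le_card hBs
  rw [DL.count_eq F hp2] at hcnt
  have key : (S.n - 1 : ℤ) ≤ (((vdata S hp2 t).X 2 ∩ (vdata S hp2 t').X 2).card : ℤ) +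
      (((vdata S hp2 t).R ∩ (vdata S hp2 t').R).card : ℤ) +
      (((vdata S hp2 t).B ∩ (vdata S hp2 t').B).card : ℤ) := by
    omega
  clear c1 c2 c3 hcnt hXs hRs hBs hne
  by_cases ht' : t' ≤ S.n
  · -- both in the A-range
    rw [vdata_X2_empty hp2 t (by omega), Finset.empty_inter,
      vdata_R hp2 t, vdata_R hp2 t', icc_inter, icc_card,
      vdata_B_le hp2 t (by omega), vdata_B_le hp2 t' ht', icc_inter, icc_card] at key
    simp only [Finset.card_empty] at key
    omega
  · by_cases ht : t ≤ S.n
    · -- t in A-range, t' beyond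
      rw [vdata_X2_empty hp2 t ht, Finset.empty_inter,
        vdata_R hp2 t, vdata_R hp2 t', icc_inter, icc_card,
        vdata_B_le hp2 t ht, vdata_B_gt hp2 t' ht', icc_inter, icc_card] at key
      simp only [Finset.card_empty] at key
      omega
    · -- both beyond n
      rw [vdata_X2 hp2 t, vdata_X2 hp2 t', icc_inter,
        show max (max 1 (S.n + S.l - t)) (max 1 (S.n + S.l - t')) = max 1 (S.n + S.l - t) by omega,
        show min (min (S.l - 1) (2 * S.n + S.l - 1 - t)) (min (S.l - 1) (2 * S.n + S.l - 1 - t')) =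
          min (S.l - 1) (2 * S.n + S.l - 1 - t') by omega,
        icc_card,
        vdata_R hp2 t, vdata_R hp2 t', icc_inter,
        show max (max 1 (t - S.n + 1)) (max 1 (t' - S.n + 1)) = max 1 (t' - S.n + 1) by omega,
        show min (min t S.n) (min t' S.n) = min t S.n by omega,
        icc_card,
        vdata_B_gt hp2 t ht, vdata_B_gt hp2 t' ht', icc_inter,
        show max (1:ℤ) 1 = 1 by omega,
        show min (min S.n (t - S.n - S.l + 1)) (min S.n (t' - S.n - S.l + 1)) =
          min S.n (t - S.n - S.l + 1) by omega,
        icc_card] at key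
      omega

lemma adj_to (hp2 : S.p = 2) (u v : {D : CDatum S // D.WellConfigured}) (t t' : ℤ)
    (hu : u.1 = vdata S hp2 t) (hv : v.1 = vdata S hp2 t')
    (h0 : 0 ≤ t) (h1 : t ≤ 2 * S.n + S.l - 2)
    (h0' : 0 ≤ t') (h1' : t' ≤ 2 * S.n + S.l - 2)
    (h : (mutGraph S).Adj u v) :
    t' = t + 1 ∨ t = t' + 1 ∨ (t = 0 ∧ t' = 2 * S.n + S.l - 2) ∨
      (t' = 0 ∧ t = 2 * S.n + S.l - 2) := by
  rcases lt_trichotomy t t' with hlt | heq | hgt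
  · rcases adj_to_core hp2 u v t t' hu hv h0 h0' h1' hlt h with h' | h'
    · exact Or.inl h'
    · exact Or.inr (Or.inr (Or.inl h'))
  · exfalso
    subst heq
    exact h.ne (Subtype.ext (hu.trans hv.symm))
  · rcases adj_to_core hp2 v u t' t hv hu h0' h0 h1 hgt h.symm with h' | h'
    · exact Or.inr (Or.inl h')
    · exact Or.inr (Or.inr (Or.inr h'))

end Stmt18Aux
/-- if `p = 2`, the mutation graph of well-configured `C`-data has
exactly `2n + l - 1` vertices, is connected, and every vertex has exactly two
neighbours (so it is a cycle on `2n + l - 1` vertices). -/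
theorem stmt18 (S : NakSetup) (hp2 : S.p = 2) :
    (Nat.card {D : CDatum S // D.WellConfigured} : ℤ) = 2 * S.n + S.l - 1 ∧
    (mutGraph S).Connected ∧
    ∀ v, Nat.card ((mutGraph S).neighborSet v) = 2 := by
  open Stmt18Aux in
  have hN := Stmt18Aux.N_big hp2
  refine ⟨?_, ?_, ?_⟩
  · -- vertex count
    have hbij : Function.Bijective (fun (x : {t : ℤ // 0 ≤ t ∧ t ≤ 2 * S.n + S.l - 2}) =>
        (⟨Stmt18Aux.vdata S hp2 x.1, Stmt18Aux.vdata_wc hp2 x.1 x.2.1 x.2.2⟩ :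
          {D : CDatum S // D.WellConfigured})) := by
      constructor
      · rintro ⟨a, ha⟩ ⟨b, hb⟩ hab
        simp only [Subtype.mk.injEq] at hab ⊢
        exact Stmt18Aux.vdata_inj hp2 a b ha.1 ha.2 hb.1 hb.2 hab
      · rintro ⟨D, hD⟩
        obtain ⟨t, h0, h1, rfl⟩ := Stmt18Aux.wc_classify D hp2 hD
        exact ⟨⟨t, h0, h1⟩, rfl⟩
    have e1 := Nat.card_congr (Equiv.ofBijective _ hbij)
    have e2 : Nat.card {t : ℤ // 0 ≤ t ∧ t ≤ 2 * S.n + S.l - 2} =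
        Nat.card (Finset.Icc (0:ℤ) (2 * S.n + S.l - 2)) := by
      apply Nat.card_congr
      exact Equiv.subtypeEquivRight (fun t => by simp [Finset.mem_Icc])
    rw [← e1, e2, Nat.card_eq_finsetCard, Int.card_Icc]
    omega
  · -- connectedness
    rw [SimpleGraph.connected_iff]
    refine ⟨?_, ⟨Stmt18Aux.vert S hp2 0⟩⟩
    intro u v
    obtain ⟨tu, hu0, hu1, huv⟩ := Stmt18Aux.wc_classify u.1 hp2 u.2
    obtain ⟨tv, hv0, hv1, hvv⟩ := Stmt18Aux.wc_classify v.1 hp2 v.2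
    have hu : u = Stmt18Aux.vert S hp2 tu :=
      Subtype.ext (by rw [huv, Stmt18Aux.vert_val hp2 tu hu0 hu1])
    have hv : v = Stmt18Aux.vert S hp2 tv :=
      Subtype.ext (by rw [hvv, Stmt18Aux.vert_val hp2 tv hv0 hv1])
    have reach0 : ∀ k : ℕ,
        (mutGraph S).Reachable (Stmt18Aux.vert S hp2 0) (Stmt18Aux.vert S hp2 k) := by
      intro k
      induction k with
      | zero => exact SimpleGraph.Reachable.refl _
      | succ k ih =>
        have h2 := (Stmt18Aux.adj_succ hp2 (k : ℤ)).reachable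
        have : ((k + 1 : ℕ) : ℤ) = (k : ℤ) + 1 := by push_cast; ring
        rw [this]
        exact ih.trans h2
    have reach : ∀ t : ℤ, 0 ≤ t →
        (mutGraph S).Reachable (Stmt18Aux.vert S hp2 0) (Stmt18Aux.vert S hp2 t) := by
      intro t ht
      have := reach0 t.toNat
      rwa [Int.toNat_of_nonneg ht] at this
    rw [hu, hv]
    exact (reach tu hu0).symm.trans (reach tv hv0)
  · -- degree two
    intro v
    obtain ⟨t, h0, h1, hvd⟩ := Stmt18Aux.wc_classify v.1 hp2 v.2
    have hv : v = Stmt18Aux.vert S hp2 t :=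
      Subtype.ext (by rw [hvd, Stmt18Aux.vert_val hp2 t h0 h1])
    have hset : (mutGraph S).neighborSet v =
        {Stmt18Aux.vert S hp2 (t - 1), Stmt18Aux.vert S hp2 (t + 1)} := by
      ext w
      simp only [SimpleGraph.mem_neighborSet, Set.mem_insert_iff, Set.mem_singleton_iff]
      constructor
      · intro hadj
        obtain ⟨t', h0', h1', hwd⟩ := Stmt18Aux.wc_classify w.1 hp2 w.2
        have hw : w = Stmt18Aux.vert S hp2 t' :=
          Subtype.ext (by rw [hwd, Stmt18Aux.vert_val hp2 t' h0' h1'])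
        rcases Stmt18Aux.adj_to hp2 v w t t' hvd hwd h0 h1 h0' h1' hadj with
          h' | h' | h' | h'
        · right; rw [hw, h']
        · left; rw [hw, show t' = t - 1 by omega]
        · left
          rw [hw, h'.2, h'.1]
          apply Stmt18Aux.vert_congr
          rw [show (0:ℤ) - 1 = -1 by ring,
            show 2 * S.n + S.l - 2 = -1 + (2 * S.n + S.l - 1) * 1 by ring,
            Int.add_mul_emod_self_left]
        · right
          rw [hw, h'.1, h'.2]
          apply Stmt18Aux.vert_congr
          rw [show 2 * S.n + S.l - 2 + 1 = 2 * S.n + S.l - 1 by ring,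
            Int.emod_self, Int.zero_emod]
      · intro h'
        rcases h' with rfl | rfl
        · rw [hv]
          have h2 := (Stmt18Aux.adj_succ hp2 (t - 1)).symm
          rw [show t - 1 + 1 = t by ring] at h2
          exact h2
        · rw [hv]
          exact Stmt18Aux.adj_succ hp2 t
    have hne2 : Stmt18Aux.vert S hp2 (t - 1) ≠ Stmt18Aux.vert S hp2 (t + 1) := by
      intro he
      have hval := congrArg Subtype.val he
      have hNpos : (0:ℤ) < 2 * S.n + S.l - 1 := by omega
      have hm1 : 0 ≤ (t - 1) % (2 * S.n + S.l - 1) := Int.emod_nonneg _ (by omega)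
      have hm2 : (t - 1) % (2 * S.n + S.l - 1) < 2 * S.n + S.l - 1 :=
        Int.emod_lt_of_pos _ hNpos
      have hm3 : 0 ≤ (t + 1) % (2 * S.n + S.l - 1) := Int.emod_nonneg _ (by omega)
      have hm4 : (t + 1) % (2 * S.n + S.l - 1) < 2 * S.n + S.l - 1 :=
        Int.emod_lt_of_pos _ hNpos
      have heq : (t - 1) % (2 * S.n + S.l - 1) = (t + 1) % (2 * S.n + S.l - 1) :=
        Stmt18Aux.vdata_inj hp2 _ _ hm1 (by omega) hm3 (by omega) hval
      have hd : ((t + 1) - (t - 1)) % (2 * S.n + S.l - 1) = 0 :=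
        Int.emod_eq_emod_iff_emod_sub_eq_zero.mp heq.symm
      rw [show (t + 1) - (t - 1) = 2 by ring] at hd
      have := Int.le_of_dvd (by norm_num) (Int.dvd_of_emod_eq_zero hd)
      omega
    rw [hset, Nat.card_coe_set_eq, Set.ncard_pair hne2]
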